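/- Let p be prime, A ⊆ ℤ/pℤ nonempty, and suppose f: ℤ/pℤ → ℂ is supported in A while f̂ vanishes on some set of cardinality |A|. Then f = 0. -/

import Mathlib

open Finset

lemma sum_card_aux : ∀ (n : ℕ) (T : Finset ℕ), T.card = n →
    (∑ i ∈ Finset.range n, i ≤ ∑ t ∈ T, t) ∧
    ((∑ t ∈ T, t = ∑ i ∈ Finset.range n, i) → T = Finset.range n) := by
  intro n
  induction n with
  | zero => intro T hT; simp [Finset.card_eq_zero.mp hT]
  | succ n ih =>
    intro T hT
    have hne : T.Nonempty := Finset.card_pos.mp (by omega)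
    have hmT : T.max' hne ∈ T := T.max'_mem hne
    set m := T.max' hne with hm
    have hTsub : T ⊆ Finset.range (m + 1) := fun t ht =>
      Finset.mem_range.mpr (Nat.lt_succ_of_le (T.le_max' t ht))
    have hmn : n ≤ m := by
      have := Finset.card_le_card hTsub
      rw [hT, Finset.card_range] at this; omega
    have hT' : (T.erase m).card = n := by rw [Finset.card_erase_of_mem hmT, hT]; omega
    have hsum : ∑ t ∈ T, t = m + ∑ t ∈ T.erase m, t :=
      (Finset.add_sum_erase T id hmT).symm
    obtain ⟨ih1, ih2⟩ := ih (T.erase m) hT'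
    constructor
    · rw [Finset.sum_range_succ, hsum]; omega
    · intro he
      rw [Finset.sum_range_succ] at he
      rw [hsum] at he
      have hm_eq : m = n := by omega
      have h2 : T.erase m = Finset.range n := ih2 (by omega)
      have h3 := Finset.insert_erase hmT
      rw [h2, hm_eq] at h3
      rw [Finset.range_add_one]
      exact h3.symm

lemma kappa_image_card {n p : ℕ} (κ : Fin n → Fin p) (hκ : Function.Injective κ) :
    (Finset.image (fun i => (κ i : ℕ)) Finset.univ).card = n := by
  rw [show (fun i => (κ i : ℕ)) = Fin.val ∘ κ from rfl,
    Finset.card_image_of_injective _ (Fin.val_injective.comp hκ)]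
  simp

lemma kappa_image_sum {n p : ℕ} (κ : Fin n → Fin p) (hκ : Function.Injective κ) :
    ∑ t ∈ Finset.image (fun i => (κ i : ℕ)) Finset.univ, t = ∑ i : Fin n, (κ i : ℕ) := by
  rw [Finset.sum_image (fun i _ j _ h => hκ (Fin.val_injective h))]

lemma kappa_sum_le {n p : ℕ} (κ : Fin n → Fin p) (hκ : Function.Injective κ) :
    ∑ i ∈ Finset.range n, i ≤ ∑ i : Fin n, (κ i : ℕ) := by
  rw [← kappa_image_sum κ hκ]
  exact (sum_card_aux n _ (kappa_image_card κ hκ)).1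

lemma kappa_sum_eq {n p : ℕ} (κ : Fin n → Fin p) (hκ : Function.Injective κ)
    (h : ∑ i : Fin n, (κ i : ℕ) = ∑ i ∈ Finset.range n, i) : ∀ i, (κ i : ℕ) < n := by
  have := (sum_card_aux n _ (kappa_image_card κ hκ)).2 (by rw [kappa_image_sum κ hκ, h])
  intro i
  have hi : (κ i : ℕ) ∈ Finset.image (fun i => (κ i : ℕ)) Finset.univ := by simp
  rw [this] at hi
  exact Finset.mem_range.mp hi

lemma cheb_det_ne_zero {p : ℕ} (hp : p.Prime) {n : ℕ} (a b : Fin n → ZMod p)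
    (ha : Function.Injective a) (hb : Function.Injective b)
    {ζ : ℂ} (hζ : IsPrimitiveRoot ζ p) :
    Matrix.det (Matrix.of fun i j : Fin n => ζ ^ ((a i).val * (b j).val)) ≠ 0 := by
  haveI : Fact p.Prime := ⟨hp⟩
  haveI : NeZero p := ⟨hp.ne_zero⟩
  have hnp : n ≤ p := by
    have := Fintype.card_le_of_injective a ha
    simpa [ZMod.card] using this
  set N := ∑ i ∈ Finset.range n, i with hN
  set g : ℕ → Polynomial ℤ := fun m => ∑ t ∈ Finset.range m, Polynomial.X ^ t with hg
  set G : Polynomial ℤ := ∑ κ : Fin n → Fin p,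
      (∏ i, (((a i).val.choose (κ i) : ℤ) : Polynomial ℤ)) *
      ((Polynomial.X - 1) ^ ((∑ i, (κ i : ℕ)) - N) *
        Matrix.det (Matrix.of fun i j => (g ((b j).val)) ^ (κ i : ℕ))) with hG
  -- step 1 : the polynomial determinant factors
  have hfac : Matrix.det (Matrix.of fun i j : Fin n =>
      (Polynomial.X : Polynomial ℤ) ^ ((a i).val * (b j).val))
      = (Polynomial.X - 1) ^ N * G := by
    have hrow : ∀ i : Fin n, (fun j : Fin n => (Polynomial.X : Polynomial ℤ) ^ ((a i).val * (b j).val))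
        = ∑ k : Fin p, (((a i).val.choose (k : ℕ) : ℤ) : Polynomial ℤ) •
            (fun j : Fin n => ((Polynomial.X : Polynomial ℤ) ^ ((b j).val) - 1) ^ (k : ℕ)) := by
      intro i
      funext j
      rw [Finset.sum_apply]
      simp only [Pi.smul_apply, smul_eq_mul]
      have h1 : (Polynomial.X : Polynomial ℤ) ^ ((a i).val * (b j).val)
          = (((Polynomial.X : Polynomial ℤ) ^ ((b j).val) - 1) + 1) ^ ((a i).val) := by
        rw [sub_add_cancel, ← pow_mul, mul_comm]
      rw [h1, add_pow]
      simp only [one_pow, mul_one]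
      rw [Fin.sum_univ_eq_sum_range
        (fun k => (((a i).val.choose k : ℤ) : Polynomial ℤ) *
          ((Polynomial.X : Polynomial ℤ) ^ ((b j).val) - 1) ^ k) p]
      rw [← Finset.sum_subset (Finset.range_subset_range.mpr (ZMod.val_lt (a i)))
        (fun k hk hk' => by
          have : (a i).val < k := by
            simp only [Finset.mem_range] at hk hk'
            omega
          rw [Nat.choose_eq_zero_of_lt this]
          push_cast
          ring)]
      refine Finset.sum_congr rfl fun k _ => ?_
      push_cast
      ring
    have hsplit : (Matrix.of fun i j : Fin n =>
        (Polynomial.X : Polynomial ℤ) ^ ((a i).val * (b j).val)).det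
        = ∑ κ : Fin n → Fin p, (∏ i, (((a i).val.choose (κ i : ℕ) : ℤ) : Polynomial ℤ)) *
            (Matrix.of fun i j : Fin n =>
              ((Polynomial.X : Polynomial ℤ) ^ ((b j).val) - 1) ^ (κ i : ℕ)).det := by
      have h0 : (Matrix.of fun i j : Fin n =>
          (Polynomial.X : Polynomial ℤ) ^ ((a i).val * (b j).val))
          = Matrix.of (fun i => ∑ k : Fin p, (((a i).val.choose (k : ℕ) : ℤ) : Polynomial ℤ) •
              (fun j : Fin n => ((Polynomial.X : Polynomial ℤ) ^ ((b j).val) - 1) ^ (k : ℕ))) :=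
        congrArg Matrix.of (funext hrow)
      rw [h0]
      have key : (Matrix.detRowAlternating (n := Fin n) (R := Polynomial ℤ)).toMultilinearMap
          (fun i => ∑ k : Fin p, (((a i).val.choose (k : ℕ) : ℤ) : Polynomial ℤ) •
            (fun j : Fin n => ((Polynomial.X : Polynomial ℤ) ^ ((b j).val) - 1) ^ (k : ℕ)))
          = ∑ κ : Fin n → Fin p, (∏ i, (((a i).val.choose (κ i : ℕ) : ℤ) : Polynomial ℤ)) •
            ((Matrix.detRowAlternating (n := Fin n) (R := Polynomial ℤ)).toMultilinearMap
              (fun i => (fun j : Fin n =>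
                ((Polynomial.X : Polynomial ℤ) ^ ((b j).val) - 1) ^ (κ i : ℕ)))) := by
        refine (MultilinearMap.map_sum _ _).trans ?_
        exact Finset.sum_congr rfl fun κ _ => MultilinearMap.map_smul_univ _ _ _
      refine Eq.trans ?_ (key.trans ?_)
      · rfl
      · refine Finset.sum_congr rfl fun κ _ => ?_
        rw [smul_eq_mul]
        rfl
    rw [hsplit, hG, Finset.mul_sum]
    refine Finset.sum_congr rfl fun κ _ => ?_
    by_cases hκ : Function.Injective κ
    · have hge := kappa_sum_le κ hκ
      have hXb : ∀ j : Fin n, (Polynomial.X : Polynomial ℤ) ^ ((b j).val) - 1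
          = (Polynomial.X - 1) * g ((b j).val) := by
        intro j
        rw [hg, mul_comm]
        exact (geom_sum_mul Polynomial.X ((b j).val)).symm
      have hdet2 : (Matrix.of fun i j : Fin n =>
          ((Polynomial.X : Polynomial ℤ) ^ ((b j).val) - 1) ^ (κ i : ℕ)).det
          = (Polynomial.X - 1) ^ (∑ i, (κ i : ℕ)) *
            (Matrix.of fun i j : Fin n => (g ((b j).val)) ^ (κ i : ℕ)).det := by
        have h2 : (Matrix.of fun i j : Fin n =>
            ((Polynomial.X : Polynomial ℤ) ^ ((b j).val) - 1) ^ (κ i : ℕ))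
            = Matrix.of fun i j : Fin n =>
              ((Polynomial.X - 1) ^ (κ i : ℕ)) * ((g ((b j).val)) ^ (κ i : ℕ)) := by
          ext i j
          rw [Matrix.of_apply, Matrix.of_apply, hXb j, mul_pow]
        rw [h2]; refine (Matrix.det_mul_column _ (Matrix.of fun i j => g ((b j).val) ^ (κ i : ℕ))).trans ?_
        rw [Finset.prod_pow_eq_pow_sum]
      rw [hdet2]
      have hpow : ((Polynomial.X : Polynomial ℤ) - 1) ^ (∑ i, (κ i : ℕ))
          = (Polynomial.X - 1) ^ N * (Polynomial.X - 1) ^ ((∑ i, (κ i : ℕ)) - N) := by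
        rw [← pow_add]
        congr 1
        omega
      rw [hpow]
      ring
    · obtain ⟨i1, i2, h12, hne12⟩ := Function.not_injective_iff.mp hκ
      have z1 : (Matrix.of fun i j : Fin n =>
          ((Polynomial.X : Polynomial ℤ) ^ ((b j).val) - 1) ^ (κ i : ℕ)).det = 0 :=
        Matrix.det_zero_of_row_eq hne12 (funext fun j => by simp [h12])
      have z2 : (Matrix.of fun i j : Fin n => (g ((b j).val)) ^ (κ i : ℕ)).det = 0 :=
        Matrix.det_zero_of_row_eq hne12 (funext fun j => by simp [h12])
      rw [z1, z2]
      ring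
  -- step 2 : value of G at 1, mod p, is nonzero
  have hG1 : ¬ ((p : ℤ) ∣ G.eval 1) := by
    intro hdvd
    have hcast : ((G.eval 1 : ℤ) : ZMod p) = 0 :=
      (ZMod.intCast_zmod_eq_zero_iff_dvd _ _).mpr hdvd
    have hV : (Matrix.of fun i j : Fin n => (b j) ^ (i : ℕ)).det ≠ 0 := by
      have : (Matrix.of fun i j : Fin n => (b j) ^ (i : ℕ)) = (Matrix.vandermonde b).transpose := by
        ext i j; simp [Matrix.vandermonde]
      rw [this, Matrix.det_transpose]
      exact Matrix.det_vandermonde_ne_zero_iff.mpr hb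
    have hC : (Matrix.of fun i k : Fin n => (((a i).val.choose (k : ℕ)) : ZMod p)).det ≠ 0 := by
      have hfact : ∀ k : Fin n, ((k : ℕ).factorial : ZMod p) ≠ 0 := by
        intro k
        rw [Ne, ZMod.natCast_eq_zero_iff]
        intro hdvd'
        have h1 := (Nat.Prime.dvd_factorial hp).mp hdvd'
        have h2 := k.isLt
        omega
      have key : (∏ k : Fin n, ((k : ℕ).factorial : ZMod p)) *
          (Matrix.of fun i k : Fin n => (((a i).val.choose (k : ℕ)) : ZMod p)).det
          = (Matrix.vandermonde (fun i => ((a i).val : ZMod p))).det := by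
        rw [Matrix.det_eval_matrixOfPolynomials_eq_det_vandermonde
          (fun i => ((a i).val : ZMod p)) (fun k => descPochhammer (ZMod p) (k : ℕ))
          (fun k => descPochhammer_natDegree _ _) (fun k => monic_descPochhammer _ _)]
        rw [← Matrix.det_mul_row]
        congr 1
        ext i k
        simp only [Matrix.of_apply]
        rw [descPochhammer_eval_eq_descFactorial]
        rw [Nat.descFactorial_eq_factorial_mul_choose]
        push_cast
        ring
      intro h0
      rw [h0, mul_zero] at key
      have hvd : (Matrix.vandermonde (fun i => ((a i).val : ZMod p))).det ≠ 0 := by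
        apply Matrix.det_vandermonde_ne_zero_iff.mpr
        intro i j hij
        apply ha
        have : (((a i).val : ZMod p)) = ((a j).val : ZMod p) := hij
        simpa [ZMod.natCast_val, ZMod.cast_id] using this
      exact hvd key.symm
    apply absurd hcast
    set ψ : Polynomial ℤ →+* ZMod p :=
      (Int.castRingHom (ZMod p)).comp (Polynomial.evalRingHom (1 : ℤ)) with hψdef
    have hψ : ∀ q : Polynomial ℤ, ψ q = ((q.eval 1 : ℤ) : ZMod p) := fun q => rfl
    have e1 : ((G.eval 1 : ℤ) : ZMod p) = ∑ κ : Fin n → Fin p,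
        (∏ i, (((a i).val.choose (κ i : ℕ) : ZMod p))) *
        ((0 : ZMod p) ^ ((∑ i, (κ i : ℕ)) - N) *
          (Matrix.of fun i j : Fin n => (b j) ^ (κ i : ℕ)).det) := by
      rw [← hψ, hG, map_sum]
      refine Finset.sum_congr rfl fun κ _ => ?_
      rw [map_mul, map_prod, map_mul, map_pow, RingHom.map_det]
      have c2 : ψ (Polynomial.X - 1) = 0 := by simp [hψ]
      have c3 : ψ.mapMatrix (Matrix.of fun i j : Fin n => (g ((b j).val)) ^ (κ i : ℕ))
          = Matrix.of fun i j : Fin n => (b j) ^ (κ i : ℕ) := by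
        ext i j
        simp [hψ, hg, Polynomial.eval_finset_sum, ZMod.natCast_val, ZMod.cast_id]
      rw [c2, c3]
      congr 1
      exact Finset.prod_congr rfl fun i _ => by simp [hψ]
    have e2 : (∑ κ : Fin n → Fin p,
        (∏ i, (((a i).val.choose (κ i : ℕ) : ZMod p))) *
        ((0 : ZMod p) ^ ((∑ i, (κ i : ℕ)) - N) *
          (Matrix.of fun i j : Fin n => (b j) ^ (κ i : ℕ)).det))
        = (Matrix.of fun i k : Fin n => (((a i).val.choose (k : ℕ)) : ZMod p)).det *
          (Matrix.of fun i j : Fin n => (b j) ^ (i : ℕ)).det := by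
      classical
      set ι : Equiv.Perm (Fin n) → (Fin n → Fin p) := fun σ i => Fin.castLE hnp (σ i) with hι
      have hιinj : Function.Injective ι := by
        intro σ τ h
        ext i
        have h1 : ι σ i = ι τ i := congrFun h i
        have h2 : ((ι σ i : Fin p) : ℕ) = ((ι τ i : Fin p) : ℕ) := congrArg Fin.val h1
        simp only [hι, Fin.coe_castLE] at h2
        exact h2
      rw [← Finset.sum_subset (Finset.subset_univ (Finset.image ι Finset.univ)) ?hvanish]
      case hvanish =>
        intro κ _ hκim
        by_cases hinj : Function.Injective κ
        · have hge := kappa_sum_le κ hinj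
          by_cases heq : (∑ i, (κ i : ℕ)) = N
          · exfalso
            have hlt := kappa_sum_eq κ hinj heq
            set σ0 : Fin n → Fin n := fun i => ⟨(κ i : ℕ), hlt i⟩ with hσ0
            have hσ0inj : Function.Injective σ0 := by
              intro i j hij
              simp only [hσ0, Fin.mk.injEq] at hij
              exact hinj (Fin.ext hij)
            set σ : Equiv.Perm (Fin n) :=
              Equiv.ofBijective σ0 (Finite.injective_iff_bijective.mp hσ0inj) with hσ
            apply hκim
            rw [Finset.mem_image]
            refine ⟨σ, Finset.mem_univ σ, ?_⟩
            funext i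
            apply Fin.ext
            have : σ i = σ0 i := rfl
            simp [hι, this, hσ0]
          · have : ((∑ i, (κ i : ℕ)) - N) ≠ 0 := by omega
            rw [zero_pow this, zero_mul, mul_zero]
        · obtain ⟨i1, i2, h12, hne12⟩ := Function.not_injective_iff.mp hinj
          have hz : (Matrix.of fun i j : Fin n => (b j) ^ (κ i : ℕ)).det = 0 := by
            apply Matrix.det_zero_of_row_eq hne12
            funext j
            simp [h12]
          rw [hz, mul_zero, mul_zero]
      rw [Finset.sum_image (fun σ _ τ _ h => hιinj h)]
      have hterm : ∀ σ : Equiv.Perm (Fin n),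
          (∏ i, (((a i).val.choose ((ι σ) i : ℕ) : ZMod p))) *
          ((0 : ZMod p) ^ ((∑ i, ((ι σ) i : ℕ)) - N) *
            (Matrix.of fun i j : Fin n => (b j) ^ ((ι σ) i : ℕ)).det)
          = (((Equiv.Perm.sign σ : ℤ) : ZMod p) *
              ∏ i, (((a i).val.choose ((σ i) : ℕ) : ZMod p))) *
            (Matrix.of fun i j : Fin n => (b j) ^ (i : ℕ)).det := by
        intro σ
        have hc : ∀ i : Fin n, ((ι σ) i : ℕ) = ((σ i) : ℕ) := fun i => rfl
        have hsum : (∑ i, ((σ i) : ℕ)) = N := by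
          rw [Equiv.sum_comp σ (fun i : Fin n => (i : ℕ))]
          exact (Fin.sum_univ_eq_sum_range (fun i => i) n).trans hN.symm
        have hdp : (Matrix.of fun i j : Fin n => (b j) ^ ((σ i) : ℕ)).det
            = ((Equiv.Perm.sign σ : ℤ) : ZMod p) *
              (Matrix.of fun i j : Fin n => (b j) ^ (i : ℕ)).det := by
          have := Matrix.det_permute σ (Matrix.of fun i j : Fin n => (b j) ^ (i : ℕ))
          rw [show ((Matrix.of fun i j : Fin n => (b j) ^ (i : ℕ)).submatrix σ id)
              = (Matrix.of fun i j : Fin n => (b j) ^ ((σ i) : ℕ)) from rfl] at this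
          rw [this]
        simp only [hc]
        rw [hsum, Nat.sub_self, pow_zero, one_mul, hdp]
        ring
      rw [Finset.sum_congr rfl (fun σ _ => hterm σ), ← Finset.sum_mul]
      congr 1
      have : ∀ σ : Equiv.Perm (Fin n),
          (∏ i, (((a i).val.choose ((σ i) : ℕ) : ZMod p)))
          = ∏ i, (Matrix.of fun i k : Fin n => (((a i).val.choose (k : ℕ)) : ZMod p)).transpose (σ i) i :=
        fun σ => rfl
      rw [Finset.sum_congr rfl (fun σ _ => by rw [this σ]),
        ← Matrix.det_apply', Matrix.det_transpose]
    rw [e1, e2]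
    exact mul_ne_zero hC hV
  -- step 3 : conclude
  have hζ1 : ζ ≠ 1 := hζ.ne_one hp.one_lt
  have hGζ : Polynomial.aeval ζ G ≠ 0 := by
    intro h0
    have hint : IsIntegral ℤ ζ := hζ.isIntegral hp.pos
    have hdvd : minpoly ℤ ζ ∣ G := minpoly.isIntegrallyClosed_dvd hint h0
    rw [← Polynomial.cyclotomic_eq_minpoly hζ hp.pos] at hdvd
    have : (Polynomial.cyclotomic p ℤ).eval 1 ∣ G.eval 1 := Polynomial.eval_dvd hdvd
    rw [Polynomial.eval_one_cyclotomic_prime] at this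
    exact hG1 this
  have key : Matrix.det (Matrix.of fun i j : Fin n => ζ ^ ((a i).val * (b j).val))
      = (ζ - 1) ^ N * Polynomial.aeval ζ G := by
    have := congrArg (Polynomial.aeval ζ) hfac
    rw [map_mul, map_pow, map_sub, Polynomial.aeval_X, map_one] at this
    rw [← this, AlgHom.map_det]
    congr 1
    ext i j
    simp
  rw [key]
  exact mul_ne_zero (pow_ne_zero _ (sub_ne_zero.mpr hζ1)) hGζ


open Complex

noncomputable def dft {p : ℕ} [NeZero p] (f : ZMod p → ℂ) (ξ : ZMod p) : ℂ :=
  (p : ℂ)⁻¹ * ∑ x : ZMod p, f x * Complex.exp (-2 * Real.pi * Complex.I * ((x.val : ℂ) * (ξ.val : ℂ)) / p)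

theorem supported_in_A_hat_vanishes
    (p : ℕ) (hp : p.Prime) [NeZero p]
    (A B : Set (ZMod p)) (hA : A.Nonempty) (hB : B.ncard = A.ncard)
    (f : ZMod p → ℂ) (hsupp : ∀ x : ZMod p, x ∉ A → f x = 0)
    (hhat : ∀ ξ ∈ B, dft f ξ = 0) :
    f = 0 := by
  classical
  set ζ : ℂ := Complex.exp (-2 * Real.pi * Complex.I / p) with hζdef
  have hζ : IsPrimitiveRoot ζ p := by
    have h := Complex.isPrimitiveRoot_exp p hp.ne_zero
    have he : ζ = (Complex.exp (2 * Real.pi * Complex.I / p))⁻¹ := by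
      rw [hζdef, ← Complex.exp_neg]
      congr 1
      ring
    rw [he]
    exact h.inv
  have hAfin : A.Finite := A.toFinite
  have hBfin : B.Finite := B.toFinite
  set n := A.ncard with hn
  have hcardA : hAfin.toFinset.card = n := by
    rw [hn, Set.ncard_eq_toFinset_card _ hAfin]
  have hcardB : hBfin.toFinset.card = n := by
    rw [← hB, Set.ncard_eq_toFinset_card _ hBfin]
  set a0 : Fin n ≃ hAfin.toFinset := (finCongr hcardA.symm).trans hAfin.toFinset.equivFin.symm
    with ha0
  set b0 : Fin n ≃ hBfin.toFinset := (finCongr hcardB.symm).trans hBfin.toFinset.equivFin.symm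
    with hb0
  set a : Fin n → ZMod p := fun i => (a0 i : ZMod p) with ha
  set b : Fin n → ZMod p := fun j => (b0 j : ZMod p) with hbdef
  have hainj : Function.Injective a := fun i j h => a0.injective (Subtype.ext h)
  have hbinj : Function.Injective b := fun i j h => b0.injective (Subtype.ext h)
  have hamem : ∀ i, a i ∈ A := fun i => hAfin.mem_toFinset.mp (a0 i).2
  have hbmem : ∀ j, b j ∈ B := fun j => hBfin.mem_toFinset.mp (b0 j).2
  have hexp : ∀ (x ξ : ZMod p),
      Complex.exp (-2 * Real.pi * Complex.I * ((x.val : ℂ) * (ξ.val : ℂ)) / p)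
      = ζ ^ (x.val * ξ.val) := by
    intro x ξ
    rw [hζdef, ← Complex.exp_nat_mul]
    congr 1
    push_cast
    ring
  have hsum : ∀ j : Fin n, ∑ i : Fin n, ζ ^ ((b j).val * (a i).val) * f (a i) = 0 := by
    intro j
    have h0 := hhat (b j) (hbmem j)
    rw [dft] at h0
    have hp0 : (p : ℂ) ≠ 0 := by
      exact_mod_cast hp.ne_zero
    have h1 : ∑ x : ZMod p, f x * ζ ^ (x.val * (b j).val) = 0 := by
      rcases mul_eq_zero.mp h0 with h | h
      · exact absurd h (inv_ne_zero hp0)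
      · rw [← h]
        exact Finset.sum_congr rfl fun x _ => by rw [hexp]
    have h2 : ∑ x ∈ hAfin.toFinset, f x * ζ ^ (x.val * (b j).val) = 0 := by
      rw [← h1]
      exact Finset.sum_subset (Finset.subset_univ _) fun x _ hx => by
        rw [hsupp x (fun hxA => hx (hAfin.mem_toFinset.mpr hxA)), zero_mul]
    have h3 : ∑ i : Fin n, f (a i) * ζ ^ ((a i).val * (b j).val) = 0 := by
      rw [← h2, ← Finset.sum_coe_sort hAfin.toFinset (fun x => f x * ζ ^ (x.val * (b j).val))]
      exact Equiv.sum_comp a0 (fun s : hAfin.toFinset =>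
        f (s : ZMod p) * ζ ^ ((s : ZMod p).val * (b j).val))
    rw [← h3]
    exact Finset.sum_congr rfl fun i _ => by rw [mul_comm ((b j).val) ((a i).val), mul_comm]
  have hMdet : (Matrix.of fun j i : Fin n => ζ ^ ((b j).val * (a i).val)).det ≠ 0 :=
    cheb_det_ne_zero hp b a hbinj hainj hζ
  have hv : (Matrix.of fun j i : Fin n => ζ ^ ((b j).val * (a i).val)).mulVec
      (fun i => f (a i)) = 0 := by
    funext j
    simpa [Matrix.mulVec, dotProduct] using hsum j
  have hv0 := Matrix.eq_zero_of_mulVec_eq_zero hMdet hv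
  funext x
  by_cases hx : x ∈ A
  · obtain ⟨i, rfl⟩ : ∃ i, a i = x := ⟨a0.symm ⟨x, hAfin.mem_toFinset.mpr hx⟩, by
      simp [ha]⟩
    exact congrFun hv0 i
  · exact hsupp x hx
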